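/- Let (L₁, L₂, P, (⊛ᵢ, ↙ⁱ, ↖ᵢ)_{i∈I}) be a multi-adjoint object-oriented frame and (X, Y, φ, τ) a context of this frame. Define φ† : (X → L₁) → (Y → L₂) by (φ† μ)(y) = ⨆_{x∈X} μ(x) ⊛_{τ(y)} φ(x,y), and φ_† : (Y → L₂) → (X → L₁) by (φ_† λ)(x) = ⨅_{y∈Y} λ(y) ↙^{τ(y)} φ(x,y). Then (φ†, φ_†) is a (covariant) Galois connection: for all μ : X → L₁ and λ : Y → L₂, φ† μ ≤ λ (pointwise in L₂) if and only if μ ≤ φ_† λ (pointwise in L₁). -/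
import Mathlib


/-- For a context of a multi-adjoint object-oriented frame, the
operators `φ†` and `φ_†` form a (covariant) Galois connection. -/
theorem stmt_14 {L₁ L₂ P : Type*} [CompleteLattice L₁] [CompleteLattice L₂]
    [CompleteLattice P] {I : Type*}
    (w : I → L₁ → P → L₂) (ld : I → L₂ → P → L₁) (lu : I → L₂ → L₁ → P)
    (adj : ∀ (i : I) (x : L₁) (z : P) (y : L₂),
      (w i x z ≤ y ↔ x ≤ ld i y z) ∧ (w i x z ≤ y ↔ z ≤ lu i y x))
    {X Y : Type*} (φ : X → Y → P) (τ : Y → I)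
    (dag : (X → L₁) → Y → L₂) (ldag : (Y → L₂) → X → L₁)
    (hdag : ∀ (μ : X → L₁) (y : Y), dag μ y = ⨆ x, w (τ y) (μ x) (φ x y))
    (hldag : ∀ (lam : Y → L₂) (x : X), ldag lam x = ⨅ y, ld (τ y) (lam y) (φ x y)) :
    ∀ (μ : X → L₁) (lam : Y → L₂), dag μ ≤ lam ↔ μ ≤ ldag lam := by
  intro μ lam
  constructor
  · intro h x
    rw [hldag]
    refine le_iInf fun y => ?_
    exact ((adj (τ y) (μ x) (φ x y) (lam y)).1).mp
      (le_trans (le_iSup (fun x => w (τ y) (μ x) (φ x y)) x) ((hdag μ y) ▸ h y))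
  · intro h y
    rw [hdag]
    refine iSup_le fun x => ?_
    exact ((adj (τ y) (μ x) (φ x y) (lam y)).1).mpr
      (le_trans (h x) ((hldag lam x) ▸ iInf_le _ y))
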